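/- Let n ≥ 3 be an odd integer, t ∈ (0,1), and let {x_1,…,x_{2n+1}} be the elongated pyramid vertex set with parameter t. Then this set is extremal: all pairwise distances are at most 1, and the number of unordered pairs {i,j} with 1 ≤ i < j ≤ 2n+1 and |x_i − x_j| = 1 is exactly 4n = 2(2n+1) − 2. -/

import Mathlib

open Real MeasureTheory Metric

noncomputable def pt (a b c : ℝ) : EuclideanSpace ℝ (Fin 3) :=
  (EuclideanSpace.equiv (Fin 3) ℝ).symm ![a, b, c]

lemma pt_apply (a b c : ℝ) (i : Fin 3) : pt a b c i = ![a,b,c] i := rfl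

lemma dist_pt (a b c d e f : ℝ) :
    dist (pt a b c) (pt d e f) = Real.sqrt ((a-d)^2+(b-e)^2+(c-f)^2) := by
  rw [EuclideanSpace.dist_eq]
  simp only [pt_apply, Fin.sum_univ_three, Real.dist_eq, sq_abs,
    Matrix.cons_val_zero, Matrix.cons_val_one, Matrix.head_cons, Matrix.cons_val_two,
    Matrix.tail_cons]

lemma smul_pt (t a b α : ℝ) : t • pt a b 0 - α • pt 0 0 1 = pt (t*a) (t*b) (-α) := by
  ext i
  fin_cases i <;> simp [pt_apply]

lemma smul_pt' (β : ℝ) : β • pt 0 0 1 = pt 0 0 β := by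
  ext i
  fin_cases i <;> simp [pt_apply]

lemma chord2 (a b u v : ℝ) :
    (u*Real.cos a - v*Real.cos b)^2 + (u*Real.sin a - v*Real.sin b)^2
      = u^2 + v^2 - 2*u*v*Real.cos (a-b) := by
  rw [Real.cos_sub]
  linear_combination u^2*(Real.sin_sq_add_cos_sq a) + v^2 * (Real.sin_sq_add_cos_sq b)

lemma dist_trig (R θ φ u v w1 w2 a b a' b' : ℝ) (hR : R ≠ 0)
    (ha : a = u*Real.cos θ/R) (hb : b = u*Real.sin θ/R)
    (ha' : a' = v*Real.cos φ/R) (hb' : b' = v*Real.sin φ/R) :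
    dist (pt a b w1) (pt a' b' w2)
      = Real.sqrt ((u^2 + v^2 - 2*u*v*Real.cos (θ-φ))/R^2 + (w1-w2)^2) := by
  subst ha hb ha' hb'
  rw [dist_pt]
  congr 1
  have h := chord2 θ φ u v
  field_simp
  linear_combination h

lemma aux_lt (sv av wv : ℝ) (ha : 0 ≤ av) (hw : 0 ≤ wv) (hs : 0 ≤ sv)
    (h2 : sv^2 < av^2 + wv^2) : sv < av + wv := by
  by_contra hcon
  push_neg at hcon
  nlinarith

lemma keyA (n m k : ℕ) (hm : n = 2*m+1) (hm1 : 1 ≤ m) (hk1 : 1 ≤ k) (hk2 : k ≤ m) :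
    Real.cos (π - π/n) ≤ Real.cos (2*π*k/n) ∧
      (Real.cos (2*π*k/n) = Real.cos (π - π/n) ↔ k = m) := by
  have hn0 : (0:ℝ) < n := by
    have : 0 < n := by omega
    exact_mod_cast this
  have hπ : (0:ℝ) < π := Real.pi_pos
  have hx0 : (0:ℝ) ≤ 2*π*k/n := by positivity
  have hkr : (k:ℝ) ≤ m := by exact_mod_cast hk2
  have hnr : (n:ℝ) = 2*m+1 := by exact_mod_cast hm
  have hrw : π - π/n = (π*(n:ℝ) - π)/n := by field_simp
  have hxy : 2*π*k/n ≤ π - π/n := by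
    rw [hrw, div_le_div_iff_of_pos_right hn0]
    nlinarith
  have hyπ : π - π/n ≤ π := by
    have : 0 < π/n := by positivity
    linarith
  have hy0 : (0:ℝ) ≤ π - π/n := by
    have : π/n ≤ π := div_le_self hπ.le (by exact_mod_cast Nat.one_le_iff_ne_zero.2 (by omega))
    linarith
  constructor
  · exact Real.cos_le_cos_of_nonneg_of_le_pi hx0 hyπ hxy
  · constructor
    · intro h
      have heq := Real.injOn_cos ⟨hx0, le_trans hxy hyπ⟩ ⟨hy0, hyπ⟩ h
      rw [hrw] at heq
      rw [div_eq_div_iff hn0.ne' hn0.ne'] at heq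
      have h2 : 2*π*(k:ℝ) = π*(n:ℝ) - π := mul_right_cancel₀ hn0.ne' heq
      rw [hnr] at h2
      have : (k:ℝ) = m := by nlinarith [hπ]
      exact_mod_cast this
    · rintro rfl
      congr 1
      rw [hrw, div_eq_div_iff hn0.ne' hn0.ne', hnr]
      ring

lemma keyB (n m k : ℕ) (hm : n = 2*m+1) (hm1 : 1 ≤ m) (hk1 : 1 ≤ k) (hk2 : k ≤ 2*m) :
    Real.cos (π - π/n) ≤ Real.cos (2*π*k/n) ∧
      (Real.cos (2*π*k/n) = Real.cos (π - π/n) ↔ (k = m ∨ k = m+1)) := by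
  rcases le_or_gt k m with hk | hk
  · have := keyA n m k hm hm1 hk1 hk
    refine ⟨this.1, ?_⟩
    rw [this.2]
    omega
  · have hk' : 1 ≤ n - k ∧ n - k ≤ m := by omega
    have hcast : ((n-k:ℕ):ℝ) = (n:ℝ) - k := by
      have : k ≤ n := by omega
      push_cast [this]; ring
    have hn0 : (0:ℝ) < n := by
      have : 0 < n := by omega
      exact_mod_cast this
    have hcos : Real.cos (2*π*(n-k:ℕ)/n) = Real.cos (2*π*k/n) := by
      rw [hcast]
      have : 2*π*((n:ℝ)-k)/n = 2*π - 2*π*k/n := by field_simp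
      rw [this, Real.cos_two_pi_sub]
    have := keyA n m (n-k) hm hm1 hk'.1 hk'.2
    rw [hcos] at this
    refine ⟨this.1, ?_⟩
    rw [this.2]
    omega

lemma keyC (n m k : ℕ) (hm : n = 2*m+1) (hm1 : 1 ≤ m) (hk2 : k ≤ 2*m) :
    Real.cos (π - π/n) ≤ Real.cos (2*π*k/n) := by
  rcases Nat.eq_zero_or_pos k with rfl | hk1
  · have h1 : Real.cos (π - π/n) ≤ 1 := Real.cos_le_one _
    simpa using h1
  · exact (keyB n m k hm hm1 hk1 hk2).1

lemma modl (n j' B : ℕ) (h1 : 1 ≤ j') (h2 : j' ≤ n) :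
    j' = B % n + 1 ↔ j' ≡ B + 1 [MOD n] := by
  constructor
  · rintro rfl
    exact (Nat.mod_modEq B n).add_right 1
  · intro h
    have e : j' - 1 + 1 = j' := by omega
    have h' : (j'-1) + 1 ≡ B + 1 [MOD n] := by rw [e]; exact h
    have h'' : (j'-1) % n = B % n := Nat.ModEq.add_right_cancel' 1 h'
    have hlt : j' - 1 < n := by omega
    rw [Nat.mod_eq_of_lt hlt] at h''
    omega

lemma modA (n i j' d : ℕ) (h1 : 1 ≤ j') (h2 : j' ≤ n) (hd : d < n) :
    (i + n - j') % n = d ↔ j' = (i + n - d - 1) % n + 1 := by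
  have e1 : (i + n - d - 1) + 1 = i + n - d := by omega
  rw [modl n j' (i+n-d-1) h1 h2, e1]
  have e2 : (i + n - j') + j' = i + n := by omega
  have e3 : (i + n - d) + d = i + n := by omega
  constructor
  · intro h
    have hA : i + n - j' ≡ d [MOD n] := by
      unfold Nat.ModEq
      rw [h, Nat.mod_eq_of_lt hd]
    have h4 : (i + n - j') + j' ≡ d + j' [MOD n] := hA.add_right j'
    rw [e2] at h4
    have h5 : (i + n - d) + d ≡ j' + d [MOD n] := by
      rw [e3]
      calc i + n ≡ d + j' [MOD n] := h4
        _ = j' + d := by ring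
    exact (Nat.ModEq.add_right_cancel' d h5).symm
  · intro h
    have h5 : (i + n - d) + d ≡ j' + d [MOD n] := (h.symm.add_right d)
    rw [e3] at h5
    have h4 : (i + n - j') + j' ≡ d + j' [MOD n] := by
      rw [e2]
      calc i + n ≡ j' + d [MOD n] := h5
        _ = d + j' := by ring
    have := Nat.ModEq.add_right_cancel' j' h4
    unfold Nat.ModEq at this
    rw [Nat.mod_eq_of_lt hd] at this
    exact this

lemma cosk (n i j' : ℕ) (hn : 0 < n) (hj : j' ≤ i + n) :
    Real.cos (2*π*((i:ℝ) - j')/n) = Real.cos (2*π*(((i+n-j') % n : ℕ):ℝ)/n) := by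
  have hn0 : (0:ℝ) < n := by exact_mod_cast hn
  set q := (i+n-j') / n with hq
  set k := (i+n-j') % n with hk
  have hdm : n * q + k = i + n - j' := Nat.div_add_mod _ n
  have hcast : (i:ℝ) + n - j' = n*q + k := by
    have : ((i + n - j' : ℕ):ℝ) = (i:ℝ) + n - j' := by push_cast [hj]; ring
    rw [← this]
    exact_mod_cast hdm.symm
  have harg : 2*π*((i:ℝ) - j')/n = 2*π*(k:ℝ)/n + (((q:ℤ) - 1 : ℤ):ℝ)*(2*π) := by
    push_cast
    field_simp
    linear_combination hcast
  rw [harg, Real.cos_add_int_mul_two_pi]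

set_option maxHeartbeats 1600000 in
/-- The elongated pyramid vertex set is extremal. -/
theorem stmt_3 (n : ℕ) (hn : 3 ≤ n) (hodd : Odd n) (t : ℝ) (ht : t ∈ Set.Ioo (0:ℝ) 1)
    (α β : ℝ)
    (hα : α = Real.sqrt (1 - (t ^ 2 + 1 + 2 * t * Real.cos (π / n)) / (2 * Real.cos (π / (2 * n))) ^ 2))
    (hβ : β = Real.sqrt (1 - t ^ 2 / (2 * Real.cos (π / (2 * n))) ^ 2) - α)
    (x : ℕ → EuclideanSpace ℝ (Fin 3))
    (hbase : ∀ j, 1 ≤ j → j ≤ n →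
      x j = pt (Real.cos (2 * π * j / n) / (2 * Real.cos (π / (2 * n))))
               (Real.sin (2 * π * j / n) / (2 * Real.cos (π / (2 * n)))) 0)
    (hmid : ∀ j, 1 ≤ j → j ≤ n → x (n + j) = t • x j - α • pt 0 0 1)
    (hapex : x (2 * n + 1) = β • pt 0 0 1) :
    (∀ i j, 1 ≤ i → i ≤ 2 * n + 1 → 1 ≤ j → j ≤ 2 * n + 1 → dist (x i) (x j) ≤ 1) ∧
    ((Finset.Icc 1 (2 * n + 1) ×ˢ Finset.Icc 1 (2 * n + 1)).filter
        (fun p => p.1 < p.2 ∧ dist (x p.1) (x p.2) = 1)).card = 4 * n := by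
  obtain ⟨m, hm⟩ := hodd
  have hm1 : 1 ≤ m := by omega
  have hn0 : 0 < n := by omega
  have hnR : (0:ℝ) < n := by exact_mod_cast hn0
  have hπ : (0:ℝ) < π := Real.pi_pos
  obtain ⟨ht0, ht1⟩ := ht
  set c := Real.cos (π/(n:ℝ)) with hc
  set C2 := Real.cos (π/(2*(n:ℝ))) with hC2def
  have hn3 : (3:ℝ) ≤ n := by exact_mod_cast hn
  have hcpos : 0 < c := by
    apply Real.cos_pos_of_mem_Ioo
    constructor
    · have : 0 < π/(n:ℝ) := by positivity
      linarith
    · rw [div_lt_div_iff₀ hnR two_pos]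
      nlinarith
  have hC2pos : 0 < C2 := by
    apply Real.cos_pos_of_mem_Ioo
    constructor
    · have : 0 < π/(2*(n:ℝ)) := by positivity
      linarith
    · rw [div_lt_div_iff₀ (by positivity) two_pos]
      nlinarith
  set R := 2*C2 with hRdef
  have hRpos : 0 < R := by positivity
  have hRne : R ≠ 0 := hRpos.ne'
  have hR2 : R^2 = 2*(1+c) := by
    have h2 : (2:ℝ)*(π/(2*(n:ℝ))) = π/(n:ℝ) := by field_simp
    have hcsq := Real.cos_sq (π/(2*(n:ℝ)))
    rw [h2] at hcsq
    rw [hRdef]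
    rw [← hC2def, ← hc] at hcsq
    nlinarith [hcsq]
  have hR2pos : (0:ℝ) < R^2 := by positivity
  have hcospi : Real.cos (π - π/(n:ℝ)) = -c := by rw [Real.cos_pi_sub, hc]
  -- α facts
  have hα0 : 0 ≤ α := hα ▸ Real.sqrt_nonneg _
  have hαin : 0 ≤ 1 - (t^2+1+2*t*c)/R^2 := by
    rw [sub_nonneg, div_le_one hR2pos, hR2]
    nlinarith
  have hα2 : α^2 = 1 - (t^2+1+2*t*c)/R^2 := by
    rw [hα]; exact Real.sq_sqrt hαin
  -- s facts
  set s := Real.sqrt (1 - t^2/R^2) with hsdef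
  have hsin : 0 ≤ 1 - t^2/R^2 := by
    rw [sub_nonneg, div_le_one hR2pos, hR2]
    nlinarith
  have hs0 : 0 ≤ s := Real.sqrt_nonneg _
  have hs2 : s^2 = 1 - t^2/R^2 := Real.sq_sqrt hsin
  have hαβ : α + β = s := by rw [hβ]; ring
  have hβ0 : 0 ≤ β := by
    rw [hβ, sub_nonneg, hα]
    apply Real.sqrt_le_sqrt
    have : 0 ≤ (1+2*t*c)/R^2 := by positivity
    have hexp : 1 - (t^2+1+2*t*c)/R^2 = 1 - t^2/R^2 - (1+2*t*c)/R^2 := by ring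
    rw [hexp]
    linarith
  clear_value c C2 R s
  -- coordinates
  have hxmid : ∀ j', 1 ≤ j' → j' ≤ n →
      x (n+j') = pt (t*(Real.cos (2*π*j'/(n:ℝ))/R)) (t*(Real.sin (2*π*j'/(n:ℝ))/R)) (-α) := by
    intro j' h1 h2
    rw [hmid j' h1 h2, hbase j' h1 h2, smul_pt]
  have hxapex : x (2*n+1) = pt 0 0 β := by rw [hapex, smul_pt']
  -- the distance formulas
  have dBB : ∀ i j : ℕ, 1 ≤ i → i ≤ n → 1 ≤ j → j ≤ n →
      dist (x i) (x j) = Real.sqrt ((2 - 2*Real.cos (2*π*((i:ℝ)-j)/n))/R^2) := by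
    intro i j hi1 hi2 hj1 hj2
    have e := dist_trig R (2*π*(i:ℝ)/n) (2*π*(j:ℝ)/n) 1 1 0 0
      (Real.cos (2*π*(i:ℝ)/n)/R) (Real.sin (2*π*(i:ℝ)/n)/R)
      (Real.cos (2*π*(j:ℝ)/n)/R) (Real.sin (2*π*(j:ℝ)/n)/R)
      hRne (by ring) (by ring) (by ring) (by ring)
    rw [hbase i hi1 hi2, hbase j hj1 hj2, e]
    congr 1
    have harg : 2*π*(i:ℝ)/n - 2*π*(j:ℝ)/n = 2*π*((i:ℝ)-(j:ℝ))/n := by ring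
    rw [harg]
    ring
  have dBM : ∀ i j' : ℕ, 1 ≤ i → i ≤ n → 1 ≤ j' → j' ≤ n →
      dist (x i) (x (n+j'))
        = Real.sqrt (1 - 2*t*(Real.cos (2*π*(((i+n-j') % n : ℕ):ℝ)/n) + c)/R^2) := by
    intro i j' hi1 hi2 hj1 hj2
    have e := dist_trig R (2*π*(i:ℝ)/n) (2*π*(j':ℝ)/n) 1 t 0 (-α)
      (Real.cos (2*π*(i:ℝ)/n)/R) (Real.sin (2*π*(i:ℝ)/n)/R)
      (t*(Real.cos (2*π*(j':ℝ)/n)/R)) (t*(Real.sin (2*π*(j':ℝ)/n)/R))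
      hRne (by ring) (by ring) (by ring) (by ring)
    rw [hbase i hi1 hi2, hxmid j' hj1 hj2, e]
    congr 1
    have harg : 2*π*(i:ℝ)/n - 2*π*(j':ℝ)/n = 2*π*((i:ℝ)-(j':ℝ))/n := by ring
    rw [harg, cosk n i j' hn0 (by omega)]
    have e2 : ((0:ℝ) - (-α))^2 = α^2 := by ring
    rw [e2, hα2]
    field_simp
    ring
  have dMM : ∀ i' j' : ℕ, 1 ≤ i' → i' ≤ n → 1 ≤ j' → j' ≤ n →
      dist (x (n+i')) (x (n+j'))
        = Real.sqrt (t^2*((2 - 2*Real.cos (2*π*(((i'+n-j') % n : ℕ):ℝ)/n))/R^2)) := by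
    intro i' j' hi1 hi2 hj1 hj2
    have e := dist_trig R (2*π*(i':ℝ)/n) (2*π*(j':ℝ)/n) t t (-α) (-α)
      (t*(Real.cos (2*π*(i':ℝ)/n)/R)) (t*(Real.sin (2*π*(i':ℝ)/n)/R))
      (t*(Real.cos (2*π*(j':ℝ)/n)/R)) (t*(Real.sin (2*π*(j':ℝ)/n)/R))
      hRne (by ring) (by ring) (by ring) (by ring)
    rw [hxmid i' hi1 hi2, hxmid j' hj1 hj2, e]
    congr 1
    have harg : 2*π*(i':ℝ)/n - 2*π*(j':ℝ)/n = 2*π*((i':ℝ)-(j':ℝ))/n := by ring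
    rw [harg, cosk n i' j' hn0 (by omega)]
    field_simp
    ring
  have dBA : ∀ i : ℕ, 1 ≤ i → i ≤ n →
      dist (x i) (x (2*n+1)) = Real.sqrt (1/R^2 + β^2) := by
    intro i hi1 hi2
    have e := dist_trig R (2*π*(i:ℝ)/n) 0 1 0 0 β
      (Real.cos (2*π*(i:ℝ)/n)/R) (Real.sin (2*π*(i:ℝ)/n)/R) 0 0
      hRne (by ring) (by ring) (by simp) (by simp)
    rw [hbase i hi1 hi2, hxapex, e]
    congr 1
    ring
  have dMA : ∀ i' : ℕ, 1 ≤ i' → i' ≤ n →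
      dist (x (n+i')) (x (2*n+1)) = 1 := by
    intro i' hi1 hi2
    have e := dist_trig R (2*π*(i':ℝ)/n) 0 t 0 (-α) β
      (t*(Real.cos (2*π*(i':ℝ)/n)/R)) (t*(Real.sin (2*π*(i':ℝ)/n)/R)) 0 0
      hRne (by ring) (by ring) (by simp) (by simp)
    rw [hxmid i' hi1 hi2, hxapex, e]
    have hval : (t^2+0^2-2*t*0*Real.cos (2*π*(i':ℝ)/n - 0))/R^2 + ((-α)-β)^2 = 1 := by
      have h' : ((-α)-β)^2 = s^2 := by rw [← hαβ]; ring
      rw [h', hs2]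
      ring
    rw [hval, Real.sqrt_one]
  -- the target finset
  set T : Finset (ℕ × ℕ) :=
    ((Finset.Icc 1 (m+1)).image (fun i => (i, i+m))) ∪
    ((Finset.Icc 1 m).image (fun i => (i, i+m+1))) ∪
    ((Finset.Icc 1 n).image (fun i => (i, n + ((i+m) % n + 1)))) ∪
    ((Finset.Icc 1 n).image (fun i => (i, n + ((i+m-1) % n + 1)))) ∪
    ((Finset.Icc 1 n).image (fun j => (n+j, 2*n+1))) with hT
  have hmemT : ∀ p : ℕ × ℕ, p ∈ T ↔
      ((∃ i ∈ Finset.Icc 1 (m+1), (i, i+m) = p) ∨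
       (∃ i ∈ Finset.Icc 1 m, (i, i+m+1) = p) ∨
       (∃ i ∈ Finset.Icc 1 n, (i, n + ((i+m) % n + 1)) = p) ∨
       (∃ i ∈ Finset.Icc 1 n, (i, n + ((i+m-1) % n + 1)) = p) ∨
       (∃ j ∈ Finset.Icc 1 n, (n+j, 2*n+1) = p)) := by
    intro p
    simp only [hT, Finset.mem_union, Finset.mem_image, or_assoc]
  clear_value T
  -- characterization
  have hchar : ∀ i j : ℕ, 1 ≤ i → i < j → j ≤ 2*n+1 →
      dist (x i) (x j) ≤ 1 ∧ (dist (x i) (x j) = 1 ↔ (i,j) ∈ T) := by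
    intro i j hi1 hij hj2
    rcases le_or_gt i n with hiB | hiM
    · rcases le_or_gt j n with hjB | hjM
      · -- base-base
        obtain ⟨k, rfl, hk1, hk2⟩ : ∃ k, j = i + k ∧ 1 ≤ k ∧ k ≤ 2*m :=
          ⟨j-i, by omega, by omega, by omega⟩
        rw [dBB i (i+k) hi1 hiB (by omega) hjB]
        have harg : 2*π*((i:ℝ)-((i+k : ℕ):ℝ))/(n:ℝ) = -(2*π*(k:ℝ)/n) := by push_cast; ring
        rw [harg, Real.cos_neg]
        have hkey := keyB n m k hm hm1 hk1 hk2
        rw [hcospi] at hkey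
        have hE1 : (2 - 2*Real.cos (2*π*(k:ℝ)/n))/R^2 ≤ 1 := by
          rw [div_le_one hR2pos, hR2]
          linarith [hkey.1]
        refine ⟨Real.sqrt_le_one.mpr hE1, ?_⟩
        rw [Real.sqrt_eq_one]
        have hEeq : (2 - 2*Real.cos (2*π*(k:ℝ)/n))/R^2 = 1 ↔
            Real.cos (2*π*(k:ℝ)/n) = -c := by
          rw [div_eq_one_iff_eq hR2pos.ne', hR2]
          constructor
          · intro h; linarith
          · intro h; rw [h]; ring
        rw [hEeq, hkey.2, hmemT]
        simp only [Finset.mem_Icc, Prod.mk.injEq]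
        constructor
        · rintro (rfl | rfl)
          · exact Or.inl ⟨i, ⟨hi1, by omega⟩, rfl, rfl⟩
          · exact Or.inr (Or.inl ⟨i, ⟨hi1, by omega⟩, rfl, by omega⟩)
        · rintro (⟨a,⟨ha1,ha2⟩,rfl,h2⟩|⟨a,⟨ha1,ha2⟩,rfl,h2⟩|⟨a,⟨ha1,ha2⟩,rfl,h2⟩|
            ⟨a,⟨ha1,ha2⟩,rfl,h2⟩|⟨a,⟨ha1,ha2⟩,h1,h2⟩)
          · omega
          · omega
          · exfalso; omega
          · exfalso; omega
          · exfalso; omega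
      · rcases le_or_gt j (2*n) with hjM2 | hjA
        · -- base-mid
          obtain ⟨j', rfl⟩ : ∃ j', j = n + j' := ⟨j-n, by omega⟩
          have hj'1 : 1 ≤ j' := by omega
          have hj'n : j' ≤ n := by omega
          rw [dBM i j' hi1 hiB hj'1 hj'n]
          generalize hkdef : (i + n - j') % n = k
          have hklt : k < n := hkdef ▸ Nat.mod_lt _ hn0
          have hkey : -c ≤ Real.cos (2*π*(k:ℝ)/n) := by
            have := keyC n m k hm hm1 (by omega)
            rwa [hcospi] at this
          have hE1 : 1 - 2*t*(Real.cos (2*π*(k:ℝ)/n) + c)/R^2 ≤ 1 := by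
            have h0 : 0 ≤ 2*t*(Real.cos (2*π*(k:ℝ)/n) + c)/R^2 := by
              apply div_nonneg _ hR2pos.le
              nlinarith
            linarith
          refine ⟨Real.sqrt_le_one.mpr hE1, ?_⟩
          rw [Real.sqrt_eq_one]
          have hEeq : (1 - 2*t*(Real.cos (2*π*(k:ℝ)/n) + c)/R^2 = 1) ↔
              Real.cos (2*π*(k:ℝ)/n) = -c := by
            constructor
            · intro h
              have h2 : 2*t*(Real.cos (2*π*(k:ℝ)/n) + c)/R^2 = 0 := by linarith
              rw [div_eq_zero_iff] at h2
              rcases h2 with h2 | h2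
              · rcases mul_eq_zero.mp h2 with h3 | h3
                · nlinarith
                · linarith
              · exact absurd h2 hR2pos.ne'
            · intro h; rw [h]; ring
          rw [hEeq]
          have hiffc : Real.cos (2*π*(k:ℝ)/n) = -c ↔ (k = m ∨ k = m+1) := by
            rcases Nat.eq_zero_or_pos k with rfl | hk1
            · simp only [Nat.cast_zero, mul_zero, zero_div, Real.cos_zero]
              constructor
              · intro h; nlinarith
              · intro h; omega
            · rw [← hcospi]
              exact (keyB n m k hm hm1 hk1 (by omega)).2
          rw [hiffc]
          have hiffm : (k = m) ↔ j' = (i+m) % n + 1 := by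
            rw [← hkdef]
            have h := modA n i j' m hj'1 hj'n (by omega)
            rwa [show i+n-m-1 = i+m by omega] at h
          have hiffm1 : (k = m+1) ↔ j' = (i+m-1) % n + 1 := by
            rw [← hkdef]
            have h := modA n i j' (m+1) hj'1 hj'n (by omega)
            rwa [show i+n-(m+1)-1 = i+m-1 by omega] at h
          rw [hiffm, hiffm1, hmemT]
          simp only [Finset.mem_Icc, Prod.mk.injEq]
          constructor
          · rintro (h | h)
            · exact Or.inr (Or.inr (Or.inl ⟨i, ⟨hi1, hiB⟩, rfl, by omega⟩))
            · exact Or.inr (Or.inr (Or.inr (Or.inl ⟨i, ⟨hi1, hiB⟩, rfl, by omega⟩)))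
          · rintro (⟨a,⟨ha1,ha2⟩,rfl,h2⟩|⟨a,⟨ha1,ha2⟩,rfl,h2⟩|⟨a,⟨ha1,ha2⟩,rfl,h2⟩|
              ⟨a,⟨ha1,ha2⟩,rfl,h2⟩|⟨a,⟨ha1,ha2⟩,h1,h2⟩)
            · exfalso; omega
            · exfalso; omega
            · left; omega
            · right; omega
            · exfalso; omega
        · -- base-apex
          obtain rfl : j = 2*n+1 := by omega
          rw [dBA i hi1 hiB]
          have hwin : (0:ℝ) ≤ 1 - 1/R^2 := by
            rw [sub_nonneg, div_le_one hR2pos, hR2]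
            nlinarith
          set w := Real.sqrt (1 - 1/R^2) with hwdef
          have hw0 : 0 ≤ w := Real.sqrt_nonneg _
          have hw2 : w^2 = 1 - 1/R^2 := Real.sq_sqrt hwin
          clear_value w
          have hslt : s < α + w := by
            have hdiff : s^2 - α^2 - w^2 = (2+2*t*c)/R^2 - 1 := by
              rw [hs2, hα2, hw2]; ring
            have hlt : (2+2*t*c)/R^2 < 1 := by
              rw [div_lt_one hR2pos, hR2]
              nlinarith
            exact aux_lt s α w hα0 hw0 hs0 (by linarith)
          have hβw : β < w := by linarith [hβ, hαβ]
          have hE : 1/R^2 + β^2 < 1 := by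
            have hb2 : β^2 < w^2 := pow_lt_pow_left₀ hβw hβ0 two_ne_zero
            rw [hw2] at hb2
            linarith
          have hlt1 : Real.sqrt (1/R^2 + β^2) < 1 := by
            rw [Real.sqrt_lt' one_pos, one_pow]
            exact hE
          have hnotT : (i, 2*n+1) ∉ T := by
            rw [hmemT]
            simp only [Finset.mem_Icc, Prod.mk.injEq]
            rintro (⟨a,⟨ha1,ha2⟩,rfl,h2⟩|⟨a,⟨ha1,ha2⟩,rfl,h2⟩|⟨a,⟨ha1,ha2⟩,rfl,h2⟩|
              ⟨a,⟨ha1,ha2⟩,rfl,h2⟩|⟨a,⟨ha1,ha2⟩,h1,h2⟩)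
            · omega
            · omega
            · have : (a+m) % n < n := Nat.mod_lt _ hn0
              omega
            · have : (a+m-1) % n < n := Nat.mod_lt _ hn0
              omega
            · omega
          exact ⟨hlt1.le, by
            constructor
            · intro h; exact absurd h hlt1.ne
            · intro h; exact absurd h hnotT⟩
    · -- i is a mid vertex
      obtain ⟨i', rfl⟩ : ∃ i', i = n + i' := ⟨i-n, by omega⟩
      have hi'1 : 1 ≤ i' := by omega
      have hi'n : i' ≤ n := by omega
      rcases le_or_gt j (2*n) with hjM2 | hjA
      · -- mid-mid
        obtain ⟨j', rfl⟩ : ∃ j', j = n + j' := ⟨j-n, by omega⟩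
        have hj'1 : 1 ≤ j' := by omega
        have hj'n : j' ≤ n := by omega
        rw [dMM i' j' hi'1 hi'n hj'1 hj'n]
        generalize hkdef : (i' + n - j') % n = k
        have hklt : k < n := hkdef ▸ Nat.mod_lt _ hn0
        have hkey : -c ≤ Real.cos (2*π*(k:ℝ)/n) := by
          have := keyC n m k hm hm1 (by omega)
          rwa [hcospi] at this
        have hE : t^2*((2 - 2*Real.cos (2*π*(k:ℝ)/n))/R^2) < 1 := by
          have h1 : (2 - 2*Real.cos (2*π*(k:ℝ)/n))/R^2 ≤ 1 := by
            rw [div_le_one hR2pos, hR2]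
            linarith
          have ht2 : t^2 < 1 := by nlinarith
          nlinarith [sq_nonneg t, h1, ht2]
        have hlt1 : Real.sqrt (t^2*((2 - 2*Real.cos (2*π*(k:ℝ)/n))/R^2)) < 1 := by
          rw [Real.sqrt_lt' one_pos, one_pow]
          exact hE
        have hnotT : (n+i', n+j') ∉ T := by
          rw [hmemT]
          simp only [Finset.mem_Icc, Prod.mk.injEq]
          rintro (⟨a,⟨ha1,ha2⟩,h1,h2⟩|⟨a,⟨ha1,ha2⟩,h1,h2⟩|⟨a,⟨ha1,ha2⟩,h1,h2⟩|
            ⟨a,⟨ha1,ha2⟩,h1,h2⟩|⟨a,⟨ha1,ha2⟩,h1,h2⟩)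
          · omega
          · omega
          · omega
          · omega
          · omega
        exact ⟨hlt1.le, by
          constructor
          · intro h; exact absurd h hlt1.ne
          · intro h; exact absurd h hnotT⟩
      · -- mid-apex
        obtain rfl : j = 2*n+1 := by omega
        rw [dMA i' hi'1 hi'n]
        refine ⟨le_refl 1, ?_⟩
        constructor
        · intro _
          rw [hmemT]
          simp only [Finset.mem_Icc, Prod.mk.injEq]
          exact Or.inr (Or.inr (Or.inr (Or.inr ⟨i', ⟨hi'1, hi'n⟩, rfl, trivial⟩)))
        · intro _; rfl
  constructor
  · intro i j hi1 hi2 hj1 hj2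
    rcases lt_trichotomy i j with h | h | h
    · exact (hchar i j hi1 h hj2).1
    · subst h; simp
    · rw [dist_comm]; exact (hchar j i hj1 h hi2).1
  · have hfilter : ((Finset.Icc 1 (2 * n + 1) ×ˢ Finset.Icc 1 (2 * n + 1)).filter
        (fun p => p.1 < p.2 ∧ dist (x p.1) (x p.2) = 1)) = T := by
      ext p
      obtain ⟨i, j⟩ := p
      simp only [Finset.mem_filter, Finset.mem_product, Finset.mem_Icc]
      constructor
      · rintro ⟨⟨⟨hi1,hi2⟩,hj1,hj2⟩, hij, hd⟩
        exact ((hchar i j hi1 hij hj2).2).mp hd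
      · intro hmem
        have hb : 1 ≤ i ∧ i < j ∧ j ≤ 2*n+1 := by
          rw [hmemT] at hmem
          simp only [Finset.mem_Icc, Prod.mk.injEq] at hmem
          rcases hmem with ⟨a,⟨h1,h2⟩,rfl,rfl⟩|⟨a,⟨h1,h2⟩,rfl,rfl⟩|⟨a,⟨h1,h2⟩,rfl,rfl⟩|
            ⟨a,⟨h1,h2⟩,rfl,rfl⟩|⟨a,⟨h1,h2⟩,rfl,rfl⟩
          · omega
          · omega
          · have := Nat.mod_lt (a+m) hn0
            omega
          · have := Nat.mod_lt (a+m-1) hn0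
            omega
          · omega
        exact ⟨⟨⟨hb.1, by omega⟩, by omega, hb.2.2⟩, hb.2.1,
          ((hchar i j hb.1 hb.2.1 hb.2.2).2).mpr hmem⟩
    rw [hfilter, hT]
    have hmodne : ∀ a : ℕ, 1 ≤ a → (a+m) % n ≠ (a+m-1) % n := by
      intro a ha h
      have hdvd : n ∣ (a+m) - (a+m-1) := by
        rw [← Nat.modEq_iff_dvd' (by omega)]
        exact h.symm
      have hd1 : n ∣ 1 := by
        rwa [show a+m - (a+m-1) = 1 by omega] at hdvd
      have := Nat.le_of_dvd one_pos hd1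
      omega
    have hd_AB : Disjoint ((Finset.Icc 1 (m+1)).image (fun i => (i, i+m)))
        ((Finset.Icc 1 m).image (fun i => (i, i+m+1))) := by
      simp only [Finset.disjoint_left, Finset.mem_image, Finset.mem_Icc]
      rintro p ⟨a, ⟨ha1,ha2⟩, rfl⟩ ⟨b, ⟨hb1,hb2⟩, hb⟩
      rw [Prod.mk.injEq] at hb
      omega
    have hd_AC : Disjoint ((Finset.Icc 1 (m+1)).image (fun i => (i, i+m)))
        ((Finset.Icc 1 n).image (fun i => (i, n + ((i+m) % n + 1)))) := by
      simp only [Finset.disjoint_left, Finset.mem_image, Finset.mem_Icc]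
      rintro p ⟨a, ⟨ha1,ha2⟩, rfl⟩ ⟨b, ⟨hb1,hb2⟩, hb⟩
      rw [Prod.mk.injEq] at hb
      omega
    have hd_AD : Disjoint ((Finset.Icc 1 (m+1)).image (fun i => (i, i+m)))
        ((Finset.Icc 1 n).image (fun i => (i, n + ((i+m-1) % n + 1)))) := by
      simp only [Finset.disjoint_left, Finset.mem_image, Finset.mem_Icc]
      rintro p ⟨a, ⟨ha1,ha2⟩, rfl⟩ ⟨b, ⟨hb1,hb2⟩, hb⟩
      rw [Prod.mk.injEq] at hb
      omega
    have hd_AE : Disjoint ((Finset.Icc 1 (m+1)).image (fun i => (i, i+m)))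
        ((Finset.Icc 1 n).image (fun j => (n+j, 2*n+1))) := by
      simp only [Finset.disjoint_left, Finset.mem_image, Finset.mem_Icc]
      rintro p ⟨a, ⟨ha1,ha2⟩, rfl⟩ ⟨b, ⟨hb1,hb2⟩, hb⟩
      rw [Prod.mk.injEq] at hb
      omega
    have hd_BC : Disjoint ((Finset.Icc 1 m).image (fun i => (i, i+m+1)))
        ((Finset.Icc 1 n).image (fun i => (i, n + ((i+m) % n + 1)))) := by
      simp only [Finset.disjoint_left, Finset.mem_image, Finset.mem_Icc]
      rintro p ⟨a, ⟨ha1,ha2⟩, rfl⟩ ⟨b, ⟨hb1,hb2⟩, hb⟩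
      rw [Prod.mk.injEq] at hb
      omega
    have hd_BD : Disjoint ((Finset.Icc 1 m).image (fun i => (i, i+m+1)))
        ((Finset.Icc 1 n).image (fun i => (i, n + ((i+m-1) % n + 1)))) := by
      simp only [Finset.disjoint_left, Finset.mem_image, Finset.mem_Icc]
      rintro p ⟨a, ⟨ha1,ha2⟩, rfl⟩ ⟨b, ⟨hb1,hb2⟩, hb⟩
      rw [Prod.mk.injEq] at hb
      omega
    have hd_BE : Disjoint ((Finset.Icc 1 m).image (fun i => (i, i+m+1)))
        ((Finset.Icc 1 n).image (fun j => (n+j, 2*n+1))) := by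
      simp only [Finset.disjoint_left, Finset.mem_image, Finset.mem_Icc]
      rintro p ⟨a, ⟨ha1,ha2⟩, rfl⟩ ⟨b, ⟨hb1,hb2⟩, hb⟩
      rw [Prod.mk.injEq] at hb
      omega
    have hd_CD : Disjoint ((Finset.Icc 1 n).image (fun i => (i, n + ((i+m) % n + 1))))
        ((Finset.Icc 1 n).image (fun i => (i, n + ((i+m-1) % n + 1)))) := by
      simp only [Finset.disjoint_left, Finset.mem_image, Finset.mem_Icc]
      rintro p ⟨a, ⟨ha1,ha2⟩, rfl⟩ ⟨b, ⟨hb1,hb2⟩, hb⟩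
      rw [Prod.mk.injEq] at hb
      obtain ⟨rfl, hb2⟩ := hb
      have := hmodne b hb1
      omega
    have hd_CE : Disjoint ((Finset.Icc 1 n).image (fun i => (i, n + ((i+m) % n + 1))))
        ((Finset.Icc 1 n).image (fun j => (n+j, 2*n+1))) := by
      simp only [Finset.disjoint_left, Finset.mem_image, Finset.mem_Icc]
      rintro p ⟨a, ⟨ha1,ha2⟩, rfl⟩ ⟨b, ⟨hb1,hb2⟩, hb⟩
      rw [Prod.mk.injEq] at hb
      omega
    have hd_DE : Disjoint ((Finset.Icc 1 n).image (fun i => (i, n + ((i+m-1) % n + 1))))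
        ((Finset.Icc 1 n).image (fun j => (n+j, 2*n+1))) := by
      simp only [Finset.disjoint_left, Finset.mem_image, Finset.mem_Icc]
      rintro p ⟨a, ⟨ha1,ha2⟩, rfl⟩ ⟨b, ⟨hb1,hb2⟩, hb⟩
      rw [Prod.mk.injEq] at hb
      omega
    rw [Finset.card_union_of_disjoint (by
        rw [Finset.disjoint_union_left, Finset.disjoint_union_left, Finset.disjoint_union_left]
        exact ⟨⟨⟨hd_AE, hd_BE⟩, hd_CE⟩, hd_DE⟩),
      Finset.card_union_of_disjoint (by
        rw [Finset.disjoint_union_left, Finset.disjoint_union_left]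
        exact ⟨⟨hd_AD, hd_BD⟩, hd_CD⟩),
      Finset.card_union_of_disjoint (by
        rw [Finset.disjoint_union_left]
        exact ⟨hd_AC, hd_BC⟩),
      Finset.card_union_of_disjoint hd_AB]
    rw [Finset.card_image_of_injective _ (fun a b hab => by simpa using congrArg Prod.fst hab),
      Finset.card_image_of_injective _ (fun a b hab => by simpa using congrArg Prod.fst hab),
      Finset.card_image_of_injective _ (fun a b hab => by simpa using congrArg Prod.fst hab),
      Finset.card_image_of_injective _ (fun a b hab => by simpa using congrArg Prod.fst hab),
      Finset.card_image_of_injective _ (fun a b hab => by simpa using congrArg Prod.fst hab)]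
    simp only [Nat.card_Icc]
    omega
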